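/- In the symmetric 2q-state model, E[(X^{(2)}(n) − 1/(2q))(X^{(3)}(n) − 1/(2q))] = −w_n/(q−1) − z_n/(2q(q−1)) − y_n/(2q), where w_n = E[(X^{(3)}(n) − 1/(2q))²]. -/

import Mathlib

/-- Posterior probability of root state `i` given leaf configuration `A`. -/
noncomputable def posterior {n : ℕ} {S : Type*} [Fintype S]
    (p : Fin n → S → ℝ) (i : Fin n) (A : S) : ℝ :=
  p i A / ∑ j, p j A

section AuxStmt9

variable {n : ℕ} {S : Type*} [Fintype S]

lemma posterior_mul_comm9 (p : Fin n → S → ℝ) (i j : Fin n) (A : S) :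
    p i A * posterior p j A = p j A * posterior p i A := by
  unfold posterior; ring

lemma transfer9 (p : Fin n → S → ℝ) (g : Equiv.Perm (Fin n)) (e : S ≃ S)
    (he : ∀ i A, p (g i) (e A) = p i A) (F : ℝ → ℝ → ℝ → ℝ) (u v w : Fin n) :
    ∑ A, F (p u A) (posterior p v A) (posterior p w A)
      = ∑ A, F (p (g u) A) (posterior p (g v) A) (posterior p (g w) A) := by
  have hpost : ∀ i A, posterior p (g i) (e A) = posterior p i A := by
    intro i A
    unfold posterior
    rw [he]
    congr 1
    rw [← Equiv.sum_comp g (fun j => p j (e A))]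
    exact Finset.sum_congr rfl fun j _ => he j A
  rw [← Equiv.sum_comp e (fun A => F (p (g u) A) (posterior p (g v) A) (posterior p (g w) A))]
  exact Finset.sum_congr rfl fun A _ => by rw [he, hpost, hpost]

lemma swap_cond9 {q : ℕ} (a b : Fin (2 * q)) (hab : ((a : ℕ) < q) ↔ ((b : ℕ) < q)) :
    ∀ i j : Fin (2 * q),
      ((((Equiv.swap a b) i : ℕ) < q) ↔ (((Equiv.swap a b) j : ℕ) < q))
        ↔ (((i : ℕ) < q) ↔ ((j : ℕ) < q)) := by
  have h : ∀ k : Fin (2 * q), (((Equiv.swap a b) k : ℕ) < q) ↔ ((k : ℕ) < q) := by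
    intro k
    rcases eq_or_ne k a with rfl | hka
    · rw [Equiv.swap_apply_left]; exact hab.symm
    rcases eq_or_ne k b with rfl | hkb
    · rw [Equiv.swap_apply_right]; exact hab
    · rw [Equiv.swap_apply_of_ne_of_ne hka hkb]
  intro i j; rw [h i, h j]

def blockSwapFun9 (q : ℕ) (i : Fin (2 * q)) : Fin (2 * q) :=
  if h : (i : ℕ) < q then ⟨(i : ℕ) + q, by omega⟩
  else ⟨(i : ℕ) - q, by have := i.isLt; omega⟩

def blockSwap9 (q : ℕ) : Equiv.Perm (Fin (2 * q)) where
  toFun := blockSwapFun9 q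
  invFun := blockSwapFun9 q
  left_inv := by
    intro i
    unfold blockSwapFun9
    by_cases h : (i : ℕ) < q
    · rw [dif_pos h, dif_neg (by simp)]
      apply Fin.ext; simp
    · rw [dif_neg h, dif_pos (by have := i.isLt; simp; omega)]
      apply Fin.ext; simp; have := i.isLt; omega
  right_inv := by
    intro i
    unfold blockSwapFun9
    by_cases h : (i : ℕ) < q
    · rw [dif_pos h, dif_neg (by simp)]
      apply Fin.ext; simp
    · rw [dif_neg h, dif_pos (by have := i.isLt; simp; omega)]
      apply Fin.ext; simp; have := i.isLt; omega

lemma blockSwap9_val {q : ℕ} (k : Fin (2 * q)) :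
    ((blockSwap9 q k : Fin (2 * q)) : ℕ) = if (k : ℕ) < q then (k : ℕ) + q else (k : ℕ) - q := by
  show ((blockSwapFun9 q k : Fin (2 * q)) : ℕ) = _
  unfold blockSwapFun9
  by_cases h : (k : ℕ) < q
  · rw [dif_pos h, if_pos h]
  · rw [dif_neg h, if_neg h]

lemma blockSwap9_cond {q : ℕ} :
    ∀ i j : Fin (2 * q),
      ((((blockSwap9 q) i : ℕ) < q) ↔ (((blockSwap9 q) j : ℕ) < q))
        ↔ (((i : ℕ) < q) ↔ ((j : ℕ) < q)) := by
  have h : ∀ k : Fin (2 * q), (((blockSwap9 q) k : ℕ) < q) ↔ ¬ ((k : ℕ) < q) := by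
    intro k
    rw [blockSwap9_val]
    have := k.isLt
    by_cases h : (k : ℕ) < q
    · rw [if_pos h]; omega
    · rw [if_neg h]; omega
  intro i j
  rw [h i, h j]
  tauto

lemma fin_class_sum9 {q : ℕ} (hq : 1 < q) (t : Fin (2 * q) → ℝ)
    (h1 : ∀ k (hk : k < 2 * q), 1 ≤ k → k < q → t ⟨k, hk⟩ = t ⟨1, by omega⟩)
    (h2 : ∀ k (hk : k < 2 * q), q + 1 ≤ k → t ⟨k, hk⟩ = t ⟨q + 1, by omega⟩) :
    ∑ i, t i = t ⟨0, by omega⟩ + ((q : ℝ) - 1) * t ⟨1, by omega⟩ + t ⟨q, by omega⟩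
      + ((q : ℝ) - 1) * t ⟨q + 1, by omega⟩ := by
  classical
  set f : ℕ → ℝ := fun k => if h : k < 2 * q then t ⟨k, h⟩ else 0 with hf
  have key : ∑ i : Fin (2 * q), t i = ∑ k ∈ Finset.range (2 * q), f k := by
    rw [← Fin.sum_univ_eq_sum_range f (2 * q)]
    refine Finset.sum_congr rfl fun i _ => ?_
    simp only [hf]
    rw [dif_pos i.isLt]
  rw [key, Finset.range_eq_Ico,
    ← Finset.sum_Ico_consecutive f (by omega : (0:ℕ) ≤ 1) (by omega : 1 ≤ 2 * q),
    ← Finset.sum_Ico_consecutive f (by omega : (1:ℕ) ≤ q) (by omega : q ≤ 2 * q),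
    ← Finset.sum_Ico_consecutive f (by omega : q ≤ q + 1) (by omega : q + 1 ≤ 2 * q)]
  have e0 : ∑ k ∈ Finset.Ico 0 1, f k = f 0 := by simp
  have eqq : ∑ k ∈ Finset.Ico q (q + 1), f k = f q := by simp
  have e1 : ∑ k ∈ Finset.Ico 1 q, f k = ((q : ℝ) - 1) * f 1 := by
    have hc : ∀ k ∈ Finset.Ico 1 q, f k = f 1 := by
      intro k hk
      rw [Finset.mem_Ico] at hk
      have hk2 : k < 2 * q := by omega
      simp only [hf]
      rw [dif_pos hk2, dif_pos (by omega : 1 < 2 * q)]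
      exact h1 k hk2 hk.1 hk.2
    rw [Finset.sum_congr rfl hc, Finset.sum_const, Nat.card_Ico, nsmul_eq_mul]
    congr 1
    push_cast [Nat.cast_sub (by omega : 1 ≤ q)]
    ring
  have e2 : ∑ k ∈ Finset.Ico (q + 1) (2 * q), f k = ((q : ℝ) - 1) * f (q + 1) := by
    have hc : ∀ k ∈ Finset.Ico (q + 1) (2 * q), f k = f (q + 1) := by
      intro k hk
      rw [Finset.mem_Ico] at hk
      have hk2 : k < 2 * q := hk.2
      simp only [hf]
      rw [dif_pos hk2, dif_pos (by omega : q + 1 < 2 * q)]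
      exact h2 k hk2 hk.1
    rw [Finset.sum_congr rfl hc, Finset.sum_const, Nat.card_Ico, nsmul_eq_mul]
    congr 1
    push_cast [Nat.cast_sub (by omega : q + 1 ≤ 2 * q)]
    ring
  rw [e0, e1, eqq, e2]
  simp only [hf]
  rw [dif_pos (by omega : 0 < 2 * q), dif_pos (by omega : 1 < 2 * q),
    dif_pos (by omega : q < 2 * q), dif_pos (by omega : q + 1 < 2 * q)]
  ring

end AuxStmt9

/-- In the symmetric `2q`-state model (state `1` is index `0`, state `2` is index
`1`, state `q+1` is index `q`), with `y_n, z_n` the centered conditional means of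
`X⁽²⁾, X⁽³⁾` and `w_n = E[(X⁽³⁾ - 1/(2q))²]` given root `= 1`, and assuming the
model symmetry under all category-structure-preserving permutations of states:
`E[(X⁽²⁾ - 1/(2q))(X⁽³⁾ - 1/(2q))] = -w_n/(q-1) - z_n/(2q(q-1)) - y_n/(2q)`. -/
theorem stmt9 (q : ℕ) (hq : 2 ≤ q) {S : Type*} [Fintype S]
    (p : Fin (2 * q) → S → ℝ) (y z w : ℝ)
    (hp : ∀ i A, 0 ≤ p i A)
    (hroot : ∀ i, ∑ A, p i A = 1 / (2 * q))
    (hsym : ∀ g : Equiv.Perm (Fin (2 * q)),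
      (∀ i j : Fin (2 * q),
        ((((g i : ℕ) < q)) ↔ (((g j : ℕ) < q))) ↔ ((((i : ℕ) < q)) ↔ (((j : ℕ) < q)))) →
      ∃ e : S ≃ S, ∀ i A, p (g i) (e A) = p i A)
    (hy : y = (2 * q : ℝ) * (∑ A, p ⟨0, by omega⟩ A * posterior p ⟨1, by omega⟩ A)
      - 1 / (2 * q))
    (hz : z = (2 * q : ℝ) * (∑ A, p ⟨0, by omega⟩ A * posterior p ⟨q, by omega⟩ A)
      - 1 / (2 * q))
    (hw : w = (2 * q : ℝ) *
      ∑ A, p ⟨0, by omega⟩ A * (posterior p ⟨q, by omega⟩ A - 1 / (2 * q)) ^ 2) :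
    (2 * q : ℝ) * ∑ A, p ⟨0, by omega⟩ A *
        ((posterior p ⟨1, by omega⟩ A - 1 / (2 * q)) *
          (posterior p ⟨q, by omega⟩ A - 1 / (2 * q)))
      = -w / ((q : ℝ) - 1) - z / (2 * q * ((q : ℝ) - 1)) - y / (2 * q) := by

  classical
  have hq2 : 1 < q := hq
  have hi0 : 0 < 2 * q := by omega
  have hi1 : 1 < 2 * q := by omega
  have hiq : q < 2 * q := by omega
  have hiq1 : q + 1 < 2 * q := by omega
  set i0 : Fin (2 * q) := ⟨0, hi0⟩ with hi0d
  set i1 : Fin (2 * q) := ⟨1, hi1⟩ with hi1d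
  set iq : Fin (2 * q) := ⟨q, hiq⟩ with hiqd
  set iq1 : Fin (2 * q) := ⟨q + 1, hiq1⟩ with hiq1d
  have hqR : (0:ℝ) < (q:ℝ) := by exact_mod_cast (by omega : 0 < q)
  have hqne : (q:ℝ) ≠ 0 := ne_of_gt hqR
  have h2qne : (2 * (q:ℝ)) ≠ 0 := by positivity
  have hq1R : (1:ℝ) < (q:ℝ) := by exact_mod_cast hq2
  have hqm1 : (q:ℝ) - 1 ≠ 0 := sub_ne_zero.mpr (ne_of_gt hq1R)
  set T : Fin (2 * q) → ℝ :=
    fun i => ∑ A, p i0 A * ((posterior p i A - 1 / (2 * (q:ℝ))) *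
      (posterior p iq A - 1 / (2 * (q:ℝ)))) with hTdef
  set M : Fin (2 * q) → ℝ :=
    fun i => ∑ A, p i0 A * (posterior p i A - 1 / (2 * (q:ℝ))) with hMdef
  -- total probability fact
  have htot : ∀ A, p i0 A * ∑ i, posterior p i A = p i0 A := by
    intro A
    by_cases hD : (∑ j, p j A) = 0
    · have h0 : p i0 A = 0 :=
        (Finset.sum_eq_zero_iff_of_nonneg (fun j _ => hp j A)).1 hD i0 (Finset.mem_univ _)
      rw [h0]; ring
    · have h1 : ∑ i, posterior p i A = 1 := by
        unfold posterior
        rw [← Finset.sum_div, div_self hD]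
      rw [h1, mul_one]
  have hcard : ∀ x : ℝ, (2 * (q:ℝ)) * x = ∑ _i : Fin (2 * q), x := by
    intro x
    rw [Finset.sum_const, Finset.card_univ, Fintype.card_fin, nsmul_eq_mul]
    push_cast
    ring
  -- sums over all states vanish
  have hsumT : ∑ i, T i = 0 := by
    simp only [hTdef]
    rw [Finset.sum_comm]
    refine Finset.sum_eq_zero fun A _ => ?_
    have hstep : ∑ i : Fin (2 * q),
        p i0 A * ((posterior p i A - 1 / (2 * (q:ℝ))) * (posterior p iq A - 1 / (2 * (q:ℝ))))
        = (posterior p iq A - 1 / (2 * (q:ℝ))) * (∑ i, p i0 A * posterior p i A)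
          - (2 * (q:ℝ)) * ((posterior p iq A - 1 / (2 * (q:ℝ))) * (p i0 A * (1 / (2 * (q:ℝ))))) := by
      rw [hcard, Finset.mul_sum, ← Finset.sum_sub_distrib]
      exact Finset.sum_congr rfl fun i _ => by ring
    rw [hstep, ← Finset.mul_sum, htot A]
    field_simp
    ring
  have hsumM : ∑ i, M i = 0 := by
    simp only [hMdef]
    rw [Finset.sum_comm]
    refine Finset.sum_eq_zero fun A _ => ?_
    have hstep : ∑ i : Fin (2 * q), p i0 A * (posterior p i A - 1 / (2 * (q:ℝ)))
        = (∑ i, p i0 A * posterior p i A)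
          - (2 * (q:ℝ)) * (p i0 A * (1 / (2 * (q:ℝ)))) := by
      rw [hcard, ← Finset.sum_sub_distrib]
      exact Finset.sum_congr rfl fun i _ => by ring
    rw [hstep, ← Finset.mul_sum, htot A]
    field_simp
    ring
  -- class constancy via swaps
  have hT1 : ∀ k (hk : k < 2 * q), 1 ≤ k → k < q → T ⟨k, hk⟩ = T ⟨1, by omega⟩ := by
    intro k hk hk1 hkq
    obtain ⟨e, he⟩ := hsym (Equiv.swap i1 ⟨k, hk⟩)
      (swap_cond9 _ _ (iff_of_true (show (i1 : ℕ) < q from hq2) hkq))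
    have h := transfer9 p (Equiv.swap i1 ⟨k, hk⟩) e he
      (fun x y z => x * ((y - 1 / (2 * (q:ℝ))) * (z - 1 / (2 * (q:ℝ))))) i0 i1 iq
    have n1 : i0 ≠ i1 := by rw [hi0d, hi1d]; simp only [ne_eq, Fin.mk.injEq]; omega
    have n2 : i0 ≠ (⟨k, hk⟩ : Fin (2 * q)) := by
      rw [hi0d]; simp only [ne_eq, Fin.mk.injEq]; omega
    have n3 : iq ≠ i1 := by rw [hiqd, hi1d]; simp only [ne_eq, Fin.mk.injEq]; omega
    have n4 : iq ≠ (⟨k, hk⟩ : Fin (2 * q)) := by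
      rw [hiqd]; simp only [ne_eq, Fin.mk.injEq]; omega
    rw [Equiv.swap_apply_left, Equiv.swap_apply_of_ne_of_ne n1 n2,
      Equiv.swap_apply_of_ne_of_ne n3 n4] at h
    exact h.symm
  have hT2 : ∀ k (hk : k < 2 * q), q + 1 ≤ k → T ⟨k, hk⟩ = T ⟨q + 1, by omega⟩ := by
    intro k hk hk1
    obtain ⟨e, he⟩ := hsym (Equiv.swap iq1 ⟨k, hk⟩)
      (swap_cond9 _ _ (iff_of_false (show ¬ ((iq1 : ℕ) < q) by simp [hiq1d]) (show ¬ (k < q) by omega)))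
    have h := transfer9 p (Equiv.swap iq1 ⟨k, hk⟩) e he
      (fun x y z => x * ((y - 1 / (2 * (q:ℝ))) * (z - 1 / (2 * (q:ℝ))))) i0 iq1 iq
    have n1 : i0 ≠ iq1 := by rw [hi0d, hiq1d]; simp only [ne_eq, Fin.mk.injEq]; omega
    have n2 : i0 ≠ (⟨k, hk⟩ : Fin (2 * q)) := by
      rw [hi0d]; simp only [ne_eq, Fin.mk.injEq]; omega
    have n3 : iq ≠ iq1 := by rw [hiqd, hiq1d]; simp only [ne_eq, Fin.mk.injEq]; omega
    have n4 : iq ≠ (⟨k, hk⟩ : Fin (2 * q)) := by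
      rw [hiqd]; simp only [ne_eq, Fin.mk.injEq]; omega
    rw [Equiv.swap_apply_left, Equiv.swap_apply_of_ne_of_ne n1 n2,
      Equiv.swap_apply_of_ne_of_ne n3 n4] at h
    exact h.symm
  have hM1 : ∀ k (hk : k < 2 * q), 1 ≤ k → k < q → M ⟨k, hk⟩ = M ⟨1, by omega⟩ := by
    intro k hk hk1 hkq
    obtain ⟨e, he⟩ := hsym (Equiv.swap i1 ⟨k, hk⟩)
      (swap_cond9 _ _ (iff_of_true (show (i1 : ℕ) < q from hq2) hkq))
    have h := transfer9 p (Equiv.swap i1 ⟨k, hk⟩) e he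
      (fun x y _ => x * (y - 1 / (2 * (q:ℝ)))) i0 i1 iq
    have n1 : i0 ≠ i1 := by rw [hi0d, hi1d]; simp only [ne_eq, Fin.mk.injEq]; omega
    have n2 : i0 ≠ (⟨k, hk⟩ : Fin (2 * q)) := by
      rw [hi0d]; simp only [ne_eq, Fin.mk.injEq]; omega
    have n3 : iq ≠ i1 := by rw [hiqd, hi1d]; simp only [ne_eq, Fin.mk.injEq]; omega
    have n4 : iq ≠ (⟨k, hk⟩ : Fin (2 * q)) := by
      rw [hiqd]; simp only [ne_eq, Fin.mk.injEq]; omega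
    rw [Equiv.swap_apply_left, Equiv.swap_apply_of_ne_of_ne n1 n2] at h
    exact h.symm
  have hM2 : ∀ k (hk : k < 2 * q), q + 1 ≤ k → M ⟨k, hk⟩ = M ⟨q + 1, by omega⟩ := by
    intro k hk hk1
    obtain ⟨e, he⟩ := hsym (Equiv.swap iq1 ⟨k, hk⟩)
      (swap_cond9 _ _ (iff_of_false (show ¬ ((iq1 : ℕ) < q) by simp [hiq1d]) (show ¬ (k < q) by omega)))
    have h := transfer9 p (Equiv.swap iq1 ⟨k, hk⟩) e he
      (fun x y _ => x * (y - 1 / (2 * (q:ℝ)))) i0 iq1 iq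
    have n1 : i0 ≠ iq1 := by rw [hi0d, hiq1d]; simp only [ne_eq, Fin.mk.injEq]; omega
    have n2 : i0 ≠ (⟨k, hk⟩ : Fin (2 * q)) := by
      rw [hi0d]; simp only [ne_eq, Fin.mk.injEq]; omega
    have n3 : iq ≠ iq1 := by rw [hiqd, hiq1d]; simp only [ne_eq, Fin.mk.injEq]; omega
    have n4 : iq ≠ (⟨k, hk⟩ : Fin (2 * q)) := by
      rw [hiqd]; simp only [ne_eq, Fin.mk.injEq]; omega
    rw [Equiv.swap_apply_left, Equiv.swap_apply_of_ne_of_ne n1 n2] at h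
    exact h.symm
  have HsplitT : T i0 + ((q:ℝ) - 1) * T i1 + T iq + ((q:ℝ) - 1) * T iq1 = 0 :=
    (fin_class_sum9 hq T hT1 hT2).symm.trans hsumT
  have HsplitM : M i0 + ((q:ℝ) - 1) * M i1 + M iq + ((q:ℝ) - 1) * M iq1 = 0 :=
    (fin_class_sum9 hq M hM1 hM2).symm.trans hsumM
  -- block swap values
  have hg0 : blockSwap9 q i0 = iq := by
    apply Fin.ext
    rw [blockSwap9_val]
    show (if (0:ℕ) < q then 0 + q else 0 - q) = q
    rw [if_pos (by omega : (0:ℕ) < q)]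
    omega
  have hg1 : blockSwap9 q i1 = iq1 := by
    apply Fin.ext
    rw [blockSwap9_val]
    show (if (1:ℕ) < q then 1 + q else 1 - q) = q + 1
    rw [if_pos hq2]
    omega
  have hgq : blockSwap9 q iq = i0 := by
    apply Fin.ext
    rw [blockSwap9_val]
    show (if q < q then q + q else q - q) = 0
    rw [if_neg (lt_irrefl q)]
    omega
  -- block swap symmetries
  have hTe : ∑ A, p i0 A * (posterior p i1 A * posterior p iq A)
      = ∑ A, p i0 A * (posterior p iq1 A * posterior p iq A) := by
    obtain ⟨e, he⟩ := hsym (blockSwap9 q) blockSwap9_cond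
    have h := transfer9 p (blockSwap9 q) e he (fun x y z => x * (y * z)) i0 i1 iq
    rw [hg0, hg1, hgq] at h
    have h2 : ∑ A, p iq A * (posterior p iq1 A * posterior p i0 A)
        = ∑ A, p i0 A * (posterior p iq1 A * posterior p iq A) := by
      refine Finset.sum_congr rfl fun A _ => ?_
      have hc := posterior_mul_comm9 p iq i0 A
      calc p iq A * (posterior p iq1 A * posterior p i0 A)
          = (p iq A * posterior p i0 A) * posterior p iq1 A := by ring
        _ = (p i0 A * posterior p iq A) * posterior p iq1 A := by rw [hc]
        _ = p i0 A * (posterior p iq1 A * posterior p iq A) := by ring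
    exact h.trans h2
  have hTa : ∑ A, p i0 A * (posterior p i0 A * posterior p iq A)
      = ∑ A, p i0 A * (posterior p iq A * posterior p iq A) := by
    obtain ⟨e, he⟩ := hsym (blockSwap9 q) blockSwap9_cond
    have h := transfer9 p (blockSwap9 q) e he (fun x y z => x * (y * z)) i0 i0 iq
    rw [hg0, hgq] at h
    have h2 : ∑ A, p iq A * (posterior p iq A * posterior p i0 A)
        = ∑ A, p i0 A * (posterior p iq A * posterior p iq A) := by
      refine Finset.sum_congr rfl fun A _ => ?_
      have hc := posterior_mul_comm9 p iq i0 A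
      calc p iq A * (posterior p iq A * posterior p i0 A)
          = (p iq A * posterior p i0 A) * posterior p iq A := by ring
        _ = (p i0 A * posterior p iq A) * posterior p iq A := by rw [hc]
        _ = p i0 A * (posterior p iq A * posterior p iq A) := by ring
    exact h.trans h2
  have hTM : ∀ j : Fin (2 * q), T j + (1 / (2 * (q:ℝ))) * M j
      = (∑ A, p i0 A * (posterior p j A * posterior p iq A))
        - (1 / (2 * (q:ℝ))) * ∑ A, p i0 A * posterior p iq A := by
    intro j
    simp only [hTdef, hMdef, Finset.mul_sum]
    rw [← Finset.sum_add_distrib, ← Finset.sum_sub_distrib]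
    exact Finset.sum_congr rfl fun A _ => by ring
  have H3 : T iq1 + (1 / (2 * (q:ℝ))) * M iq1 = T i1 + (1 / (2 * (q:ℝ))) * M i1 := by
    rw [hTM, hTM, hTe]
  have H4 : T i0 + (1 / (2 * (q:ℝ))) * M i0 = T iq + (1 / (2 * (q:ℝ))) * M iq := by
    rw [hTM, hTM, hTa]
  -- moments
  have hroot0 : ∑ A, p i0 A = 1 / (2 * (q:ℝ)) := hroot i0
  have hMs : ∀ j : Fin (2 * q), M j = (∑ A, p i0 A * posterior p j A)
      - (1 / (2 * (q:ℝ))) * (1 / (2 * (q:ℝ))) := by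
    intro j
    simp only [hMdef]
    have h1 : ∑ A, p i0 A * (posterior p j A - 1 / (2 * (q:ℝ)))
        = (∑ A, p i0 A * posterior p j A) - (1 / (2 * (q:ℝ))) * ∑ A, p i0 A := by
      rw [Finset.mul_sum, ← Finset.sum_sub_distrib]
      exact Finset.sum_congr rfl fun A _ => by ring
    rw [h1, hroot0]
  have hy' : y = (2 * (q:ℝ)) * (∑ A, p i0 A * posterior p i1 A) - 1 / (2 * (q:ℝ)) := hy
  have hz' : z = (2 * (q:ℝ)) * (∑ A, p i0 A * posterior p iq A) - 1 / (2 * (q:ℝ)) := hz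
  have hw' : w = (2 * (q:ℝ)) *
      ∑ A, p i0 A * (posterior p iq A - 1 / (2 * (q:ℝ))) ^ 2 := hw
  have hyM : y = (2 * (q:ℝ)) * M i1 := by
    rw [hy', hMs i1]
    field_simp
  have hzM : z = (2 * (q:ℝ)) * M iq := by
    rw [hz', hMs iq]
    field_simp
  have hwT : w = (2 * (q:ℝ)) * T iq := by
    rw [hw']
    congr 1
    simp only [hTdef]
    exact Finset.sum_congr rfl fun A _ => by ring
  show (2 * (q:ℝ)) * T i1
      = -w / ((q:ℝ) - 1) - z / (2 * (q:ℝ) * ((q:ℝ) - 1)) - y / (2 * (q:ℝ))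
  rw [hyM, hzM, hwT]
  field_simp at H3 H4
  field_simp
  linear_combination ((q:ℝ)) * HsplitT
    - ((1:ℝ)/2*((q:ℝ)-1)) * H3 - ((1:ℝ)/2) * H4
    + ((1:ℝ)/2) * HsplitM
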